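/- Generalized Glivenko theorem via the intuitionistic translation: Γ ⊢_NK A if and only if Γ^j ⊢_NJ ¬¬A^j, where the intuitionistic translation leaves all connectives unchanged except (∀x A)^j = ¬∃x ¬A^j. -/

import Mathlib

/-- First-order terms: variables (de Bruijn style indices for bound variables
are merged with free variable indices) and function symbols with arguments. -/
inductive Term where
  | var : ℕ → Term
  | fn : ℕ → (ℕ → Term) → Term

/-- Lift (shift by one) all variables ≥ k. -/
def Term.lift (k : ℕ) : Term → Term
  | .var n => .var (if n < k then n else n + 1)
  | .fn f a => .fn f (fun i => (a i).lift k)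

/-- Capture-avoiding substitution of the term `s` for variable `k` (de Bruijn). -/
def Term.subst (k : ℕ) (s : Term) : Term → Term
  | .var n => if n < k then .var n else if n = k then s else .var (n - 1)
  | .fn f a => .fn f (fun i => Term.subst k s (a i))

/-- Free variables of a term. -/
def Term.fv : Term → Set ℕ
  | .var n => {n}
  | .fn _ a => ⋃ i, (a i).fv

/-- First-order formulas with primitive negation, de Bruijn binders. -/
inductive Formula where
  | pred : ℕ → (ℕ → Term) → Formula
  | bot : Formula
  | top : Formula
  | neg : Formula → Formula
  | conj : Formula → Formula → Formula
  | disj : Formula → Formula → Formula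
  | impl : Formula → Formula → Formula
  | all : Formula → Formula
  | ex : Formula → Formula

def Formula.lift (k : ℕ) : Formula → Formula
  | .pred r a => .pred r (fun i => (a i).lift k)
  | .bot => .bot
  | .top => .top
  | .neg A => .neg (A.lift k)
  | .conj A B => .conj (A.lift k) (B.lift k)
  | .disj A B => .disj (A.lift k) (B.lift k)
  | .impl A B => .impl (A.lift k) (B.lift k)
  | .all A => .all (A.lift (k + 1))
  | .ex A => .ex (A.lift (k + 1))

/-- Capture-avoiding substitution of term `s` for variable `k` in a formula. -/
def Formula.subst (k : ℕ) (s : Term) : Formula → Formula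
  | .pred r a => .pred r (fun i => Term.subst k s (a i))
  | .bot => .bot
  | .top => .top
  | .neg A => .neg (A.subst k s)
  | .conj A B => .conj (A.subst k s) (B.subst k s)
  | .disj A B => .disj (A.subst k s) (B.subst k s)
  | .impl A B => .impl (A.subst k s) (B.subst k s)
  | .all A => .all (A.subst (k + 1) (s.lift 0))
  | .ex A => .ex (A.subst (k + 1) (s.lift 0))

/-- Free variables of a formula. -/
def Formula.fv : Formula → Set ℕ
  | .pred _ a => ⋃ i, (a i).fv
  | .bot => ∅
  | .top => ∅
  | .neg A => A.fv
  | .conj A B => A.fv ∪ B.fv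
  | .disj A B => A.fv ∪ B.fv
  | .impl A B => A.fv ∪ B.fv
  | .all A => {n | n + 1 ∈ A.fv}
  | .ex A => {n | n + 1 ∈ A.fv}

/-- Object-level biconditional, as a defined connective. -/
def Formula.fIff (A B : Formula) : Formula := .conj (.impl A B) (.impl B A)

/-- `A` contains no occurrence of the universal quantifier ∀. -/
def Formula.forallFree : Formula → Prop
  | .pred _ _ => True
  | .bot => True
  | .top => True
  | .neg A => A.forallFree
  | .conj A B => A.forallFree ∧ B.forallFree
  | .disj A B => A.forallFree ∧ B.forallFree
  | .impl A B => A.forallFree ∧ B.forallFree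
  | .all _ => False
  | .ex A => A.forallFree

/-- `A` contains no occurrence of implication →. -/
def Formula.impFree : Formula → Prop
  | .pred _ _ => True
  | .bot => True
  | .top => True
  | .neg A => A.impFree
  | .conj A B => A.impFree ∧ B.impFree
  | .disj A B => A.impFree ∧ B.impFree
  | .impl _ _ => False
  | .all A => A.impFree
  | .ex A => A.impFree

/-- The minimal translation (·)^m. -/
def Formula.mtr : Formula → Formula
  | .pred r a => .pred r a
  | .bot => .bot
  | .top => .top
  | .neg A => .neg A.mtr
  | .conj A B => .conj A.mtr B.mtr
  | .disj A B => .disj A.mtr B.mtr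
  | .impl A B => .disj (.neg A.mtr) B.mtr
  | .all A => .neg (.ex (.neg A.mtr))
  | .ex A => .ex A.mtr

/-- The intuitionistic translation (·)^j. -/
def Formula.jtr : Formula → Formula
  | .pred r a => .pred r a
  | .bot => .bot
  | .top => .top
  | .neg A => .neg A.jtr
  | .conj A B => .conj A.jtr B.jtr
  | .disj A B => .disj A.jtr B.jtr
  | .impl A B => .impl A.jtr B.jtr
  | .all A => .neg (.ex (.neg A.jtr))
  | .ex A => .ex A.jtr

/-- Negative formulas: built from negated atoms, ⊥, ⊤ using only ¬, ∧, →, ∀. -/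
inductive Formula.Negative : Formula → Prop where
  | negAtom : ∀ r a, Formula.Negative (.neg (.pred r a))
  | bot : Formula.Negative .bot
  | top : Formula.Negative .top
  | neg : ∀ {A}, Formula.Negative A → Formula.Negative (.neg A)
  | conj : ∀ {A B}, Formula.Negative A → Formula.Negative B → Formula.Negative (.conj A B)
  | impl : ∀ {A B}, Formula.Negative A → Formula.Negative B → Formula.Negative (.impl A B)
  | all : ∀ {A}, Formula.Negative A → Formula.Negative (.all A)

/-- Natural deduction derivability; the flags `efq`, `raa` tell whether the
ex falso quodlibet and reductio ad absurdum rules are available.  `Deriv efq raa Γ A`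
means `A` is derivable with undischarged assumptions among `Γ`. -/
inductive Deriv (efq raa : Bool) : Set Formula → Formula → Prop where
  | hyp : ∀ {Γ A}, A ∈ Γ → Deriv efq raa Γ A
  | topI : ∀ {Γ}, Deriv efq raa Γ .top
  | negI : ∀ {Γ A}, Deriv efq raa (insert A Γ) .bot → Deriv efq raa Γ (.neg A)
  | negE : ∀ {Γ A}, Deriv efq raa Γ (.neg A) → Deriv efq raa Γ A → Deriv efq raa Γ .bot
  | conjI : ∀ {Γ A B}, Deriv efq raa Γ A → Deriv efq raa Γ B → Deriv efq raa Γ (.conj A B)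
  | conjE1 : ∀ {Γ A B}, Deriv efq raa Γ (.conj A B) → Deriv efq raa Γ A
  | conjE2 : ∀ {Γ A B}, Deriv efq raa Γ (.conj A B) → Deriv efq raa Γ B
  | disjI1 : ∀ {Γ A B}, Deriv efq raa Γ A → Deriv efq raa Γ (.disj A B)
  | disjI2 : ∀ {Γ A B}, Deriv efq raa Γ B → Deriv efq raa Γ (.disj A B)
  | disjE : ∀ {Γ A B C}, Deriv efq raa Γ (.disj A B) → Deriv efq raa (insert A Γ) C →
      Deriv efq raa (insert B Γ) C → Deriv efq raa Γ C
  | implI : ∀ {Γ A B}, Deriv efq raa (insert A Γ) B → Deriv efq raa Γ (.impl A B)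
  | implE : ∀ {Γ A B}, Deriv efq raa Γ (.impl A B) → Deriv efq raa Γ A → Deriv efq raa Γ B
  | allI : ∀ {Γ A}, Deriv efq raa (Formula.lift 0 '' Γ) A → Deriv efq raa Γ (.all A)
  | allE : ∀ {Γ A} (t : Term), Deriv efq raa Γ (.all A) → Deriv efq raa Γ (A.subst 0 t)
  | exI : ∀ {Γ A} (t : Term), Deriv efq raa Γ (A.subst 0 t) → Deriv efq raa Γ (.ex A)
  | exE : ∀ {Γ A C}, Deriv efq raa Γ (.ex A) →
      Deriv efq raa (insert A (Formula.lift 0 '' Γ)) (C.lift 0) → Deriv efq raa Γ C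
  | efqR : ∀ {Γ A}, efq = true → Deriv efq raa Γ .bot → Deriv efq raa Γ A
  | raaR : ∀ {Γ A}, raa = true → Deriv efq raa (insert (.neg A) Γ) .bot → Deriv efq raa Γ A

/-- Minimal natural deduction. -/
def NM : Set Formula → Formula → Prop := Deriv false false
/-- Intuitionistic natural deduction. -/
def NJ : Set Formula → Formula → Prop := Deriv true false
/-- Classical natural deduction (minimal + reductio ad absurdum). -/
def NK : Set Formula → Formula → Prop := Deriv false true



theorem Term.liftLift (i j : ℕ) (h : i ≤ j) : ∀ t : Term, (Term.lift j t).lift i = (Term.lift i t).lift (j+1)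
  | .var n => by
      simp only [Term.lift, Term.var.injEq]
      split_ifs <;> omega
  | .fn f a => by
      simp only [Term.lift, Term.fn.injEq, true_and]
      funext m; exact Term.liftLift i j h (a m)

theorem Formula.liftLift (i j : ℕ) (h : i ≤ j) : ∀ A : Formula,
    (Formula.lift j A).lift i = (Formula.lift i A).lift (j+1)
  | .pred r a => by
      simp only [Formula.lift, Formula.pred.injEq, true_and]
      funext m; exact Term.liftLift i j h (a m)
  | .bot => rfl
  | .top => rfl
  | .neg A => by simp only [Formula.lift]; rw [Formula.liftLift i j h A]
  | .conj A B => by simp only [Formula.lift]; rw [Formula.liftLift i j h A, Formula.liftLift i j h B]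
  | .disj A B => by simp only [Formula.lift]; rw [Formula.liftLift i j h A, Formula.liftLift i j h B]
  | .impl A B => by simp only [Formula.lift]; rw [Formula.liftLift i j h A, Formula.liftLift i j h B]
  | .all A => by simp only [Formula.lift]; rw [Formula.liftLift (i+1) (j+1) (by omega) A]
  | .ex A => by simp only [Formula.lift]; rw [Formula.liftLift (i+1) (j+1) (by omega) A]

theorem Term.liftSubst (j k : ℕ) (h : j ≤ k) (s : Term) : ∀ t : Term,
    Term.lift k (Term.subst j s t) = Term.subst j (s.lift k) (t.lift (k+1))
  | .var n => by
      simp only [Term.subst, Term.lift]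
      split_ifs <;> (try simp only [Term.lift, Term.subst]) <;> (try split_ifs) <;>
        first | rfl | (simp only [Term.var.injEq]; omega) | omega
  | .fn f a => by
      simp only [Term.subst, Term.lift, Term.fn.injEq, true_and]
      funext m; exact Term.liftSubst j k h s (a m)

theorem Formula.liftSubst (j k : ℕ) (h : j ≤ k) (s : Term) : ∀ A : Formula,
    Formula.lift k (Formula.subst j s A) = Formula.subst j (s.lift k) (A.lift (k+1))
  | .pred r a => by
      simp only [Formula.subst, Formula.lift, Formula.pred.injEq, true_and]
      funext m; exact Term.liftSubst j k h s (a m)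
  | .bot => rfl
  | .top => rfl
  | .neg A => by simp only [Formula.subst, Formula.lift]; rw [Formula.liftSubst j k h s A]
  | .conj A B => by
      simp only [Formula.subst, Formula.lift]
      rw [Formula.liftSubst j k h s A, Formula.liftSubst j k h s B]
  | .disj A B => by
      simp only [Formula.subst, Formula.lift]
      rw [Formula.liftSubst j k h s A, Formula.liftSubst j k h s B]
  | .impl A B => by
      simp only [Formula.subst, Formula.lift]
      rw [Formula.liftSubst j k h s A, Formula.liftSubst j k h s B]
  | .all A => by
      simp only [Formula.subst, Formula.lift]
      rw [Formula.liftSubst (j+1) (k+1) (by omega) (s.lift 0) A,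
        Term.liftLift 0 k (Nat.zero_le _) s]
  | .ex A => by
      simp only [Formula.subst, Formula.lift]
      rw [Formula.liftSubst (j+1) (k+1) (by omega) (s.lift 0) A,
        Term.liftLift 0 k (Nat.zero_le _) s]

theorem Term.substVarLift (j : ℕ) : ∀ t : Term,
    Term.subst j (.var j) (t.lift (j+1)) = t
  | .var n => by
      simp only [Term.lift]
      split_ifs <;> (try simp only [Term.subst]) <;> (try split_ifs) <;>
        first | rfl | (simp only [Term.var.injEq]; omega) | omega
  | .fn f a => by
      simp only [Term.lift, Term.subst, Term.fn.injEq, true_and]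
      funext m; exact Term.substVarLift j (a m)

theorem Formula.substVarLift (j : ℕ) : ∀ A : Formula,
    Formula.subst j (.var j) (A.lift (j+1)) = A
  | .pred r a => by
      simp only [Formula.lift, Formula.subst, Formula.pred.injEq, true_and]
      funext m; exact Term.substVarLift j (a m)
  | .bot => rfl
  | .top => rfl
  | .neg A => by simp only [Formula.lift, Formula.subst]; rw [Formula.substVarLift j A]
  | .conj A B => by
      simp only [Formula.lift, Formula.subst]
      rw [Formula.substVarLift j A, Formula.substVarLift j B]
  | .disj A B => by
      simp only [Formula.lift, Formula.subst]
      rw [Formula.substVarLift j A, Formula.substVarLift j B]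
  | .impl A B => by
      simp only [Formula.lift, Formula.subst]
      rw [Formula.substVarLift j A, Formula.substVarLift j B]
  | .all A => by
      simp only [Formula.lift, Formula.subst]
      have : (Term.var j).lift 0 = Term.var (j+1) := by simp [Term.lift]
      rw [this, Formula.substVarLift (j+1) A]
  | .ex A => by
      simp only [Formula.lift, Formula.subst]
      have : (Term.var j).lift 0 = Term.var (j+1) := by simp [Term.lift]
      rw [this, Formula.substVarLift (j+1) A]

theorem Formula.jtr_lift : ∀ (A : Formula) (k : ℕ), (Formula.lift k A).jtr = A.jtr.lift k
  | .pred r a, k => rfl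
  | .bot, k => rfl
  | .top, k => rfl
  | .neg A, k => by simp only [Formula.lift, Formula.jtr]; rw [Formula.jtr_lift A k]
  | .conj A B, k => by simp only [Formula.lift, Formula.jtr]; rw [Formula.jtr_lift A k, Formula.jtr_lift B k]
  | .disj A B, k => by simp only [Formula.lift, Formula.jtr]; rw [Formula.jtr_lift A k, Formula.jtr_lift B k]
  | .impl A B, k => by simp only [Formula.lift, Formula.jtr]; rw [Formula.jtr_lift A k, Formula.jtr_lift B k]
  | .all A, k => by simp only [Formula.lift, Formula.jtr]; rw [Formula.jtr_lift A (k+1)]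
  | .ex A, k => by simp only [Formula.lift, Formula.jtr]; rw [Formula.jtr_lift A (k+1)]

theorem Formula.jtr_subst : ∀ (A : Formula) (k : ℕ) (s : Term),
    (Formula.subst k s A).jtr = A.jtr.subst k s
  | .pred r a, k, s => rfl
  | .bot, k, s => rfl
  | .top, k, s => rfl
  | .neg A, k, s => by simp only [Formula.subst, Formula.jtr]; rw [Formula.jtr_subst A k s]
  | .conj A B, k, s => by simp only [Formula.subst, Formula.jtr]; rw [Formula.jtr_subst A k s, Formula.jtr_subst B k s]
  | .disj A B, k, s => by simp only [Formula.subst, Formula.jtr]; rw [Formula.jtr_subst A k s, Formula.jtr_subst B k s]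
  | .impl A B, k, s => by simp only [Formula.subst, Formula.jtr]; rw [Formula.jtr_subst A k s, Formula.jtr_subst B k s]
  | .all A, k, s => by simp only [Formula.subst, Formula.jtr]; rw [Formula.jtr_subst A (k+1) (s.lift 0)]
  | .ex A, k, s => by simp only [Formula.subst, Formula.jtr]; rw [Formula.jtr_subst A (k+1) (s.lift 0)]

theorem Deriv.mono {e r : Bool} {Γ Δ : Set Formula} {A : Formula}
    (d : Deriv e r Γ A) (h : Γ ⊆ Δ) : Deriv e r Δ A := by
  induction d generalizing Δ with
  | hyp hA => exact .hyp (h hA)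
  | topI => exact .topI
  | negI _ ih => exact .negI (ih (Set.insert_subset_insert h))
  | negE _ _ ih1 ih2 => exact .negE (ih1 h) (ih2 h)
  | conjI _ _ ih1 ih2 => exact .conjI (ih1 h) (ih2 h)
  | conjE1 _ ih => exact .conjE1 (ih h)
  | conjE2 _ ih => exact .conjE2 (ih h)
  | disjI1 _ ih => exact .disjI1 (ih h)
  | disjI2 _ ih => exact .disjI2 (ih h)
  | disjE _ _ _ ih1 ih2 ih3 =>
      exact .disjE (ih1 h) (ih2 (Set.insert_subset_insert h)) (ih3 (Set.insert_subset_insert h))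
  | implI _ ih => exact .implI (ih (Set.insert_subset_insert h))
  | implE _ _ ih1 ih2 => exact .implE (ih1 h) (ih2 h)
  | allI _ ih => exact .allI (ih (Set.image_mono h))
  | allE t _ ih => exact .allE t (ih h)
  | exI t _ ih => exact .exI t (ih h)
  | exE _ _ ih1 ih2 =>
      exact .exE (ih1 h) (ih2 (Set.insert_subset_insert (Set.image_mono h)))
  | efqR he _ ih => exact .efqR he (ih h)
  | raaR hr _ ih => exact .raaR hr (ih (Set.insert_subset_insert h))

theorem lift_image_comm (k : ℕ) (Γ : Set Formula) :
    Formula.lift 0 '' (Formula.lift k '' Γ) = Formula.lift (k+1) '' (Formula.lift 0 '' Γ) := by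
  rw [← Set.image_comp, ← Set.image_comp]
  apply Set.image_congr'
  intro A
  exact Formula.liftLift 0 k (Nat.zero_le _) A

theorem Deriv.liftD {e r : Bool} {Γ : Set Formula} {A : Formula}
    (d : Deriv e r Γ A) : ∀ k : ℕ, Deriv e r (Formula.lift k '' Γ) (A.lift k) := by
  induction d with
  | hyp hA => exact fun k => .hyp (Set.mem_image_of_mem _ hA)
  | topI => exact fun k => .topI
  | negI _ ih => exact fun k => .negI (by
      have := ih k; rw [Set.image_insert_eq] at this; exact this)
  | negE _ _ ih1 ih2 => exact fun k => .negE (ih1 k) (ih2 k)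
  | conjI _ _ ih1 ih2 => exact fun k => .conjI (ih1 k) (ih2 k)
  | conjE1 _ ih => exact fun k => .conjE1 (ih k)
  | conjE2 _ ih => exact fun k => .conjE2 (ih k)
  | disjI1 _ ih => exact fun k => .disjI1 (ih k)
  | disjI2 _ ih => exact fun k => .disjI2 (ih k)
  | disjE _ _ _ ih1 ih2 ih3 =>
      exact fun k => .disjE (ih1 k)
        (by have := ih2 k; rw [Set.image_insert_eq] at this; exact this)
        (by have := ih3 k; rw [Set.image_insert_eq] at this; exact this)
  | implI _ ih => exact fun k => .implI (by
      have := ih k; rw [Set.image_insert_eq] at this; exact this)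
  | implE _ _ ih1 ih2 => exact fun k => .implE (ih1 k) (ih2 k)
  | allI _ ih => exact fun k => .allI (by
      have := ih (k+1); rw [← lift_image_comm k] at this; exact this)
  | allE t _ ih =>
      refine fun k => ?_
      have := Deriv.allE (t.lift k) (ih k)
      rwa [← Formula.liftSubst 0 k (Nat.zero_le _)] at this
  | exI t _ ih =>
      refine fun k => Deriv.exI (t.lift k) ?_
      have := ih k
      rwa [Formula.liftSubst 0 k (Nat.zero_le _)] at this
  | exE _ _ ih1 ih2 =>
      refine fun k => Deriv.exE (ih1 k) ?_
      have := ih2 (k+1)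
      rw [Set.image_insert_eq, ← lift_image_comm k,
        ← Formula.liftLift 0 k (Nat.zero_le _)] at this
      exact this
  | efqR he _ ih => exact fun k => .efqR he (ih k)
  | raaR hr _ ih => exact fun k => .raaR hr (by
      have := ih k; rw [Set.image_insert_eq] at this; exact this)

theorem Deriv.cut {e r : Bool} {Δ : Set Formula} {C : Formula}
    (d : Deriv e r Δ C) : ∀ {Γ : Set Formula}, (∀ B ∈ Δ, Deriv e r Γ B) → Deriv e r Γ C := by
  induction d with
  | hyp hA => exact fun hs => hs _ hA
  | topI => exact fun _ => .topI
  | negI _ ih =>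
      intro Γ hs
      exact .negI (ih (fun B hB => by
        rcases hB with rfl | hB
        · exact .hyp (Set.mem_insert _ _)
        · exact (hs B hB).mono (Set.subset_insert _ _)))
  | negE _ _ ih1 ih2 => exact fun hs => .negE (ih1 hs) (ih2 hs)
  | conjI _ _ ih1 ih2 => exact fun hs => .conjI (ih1 hs) (ih2 hs)
  | conjE1 _ ih => exact fun hs => .conjE1 (ih hs)
  | conjE2 _ ih => exact fun hs => .conjE2 (ih hs)
  | disjI1 _ ih => exact fun hs => .disjI1 (ih hs)
  | disjI2 _ ih => exact fun hs => .disjI2 (ih hs)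
  | disjE _ _ _ ih1 ih2 ih3 =>
      intro Γ hs
      refine .disjE (ih1 hs) (ih2 ?_) (ih3 ?_) <;>
        · intro B hB
          rcases hB with rfl | hB
          · exact .hyp (Set.mem_insert _ _)
          · exact (hs B hB).mono (Set.subset_insert _ _)
  | implI _ ih =>
      intro Γ hs
      exact .implI (ih (fun B hB => by
        rcases hB with rfl | hB
        · exact .hyp (Set.mem_insert _ _)
        · exact (hs B hB).mono (Set.subset_insert _ _)))
  | implE _ _ ih1 ih2 => exact fun hs => .implE (ih1 hs) (ih2 hs)
  | allI _ ih =>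
      intro Γ hs
      exact .allI (ih (fun B hB => by
        obtain ⟨B', hB', rfl⟩ := hB
        exact (hs B' hB').liftD 0))
  | allE t _ ih => exact fun hs => .allE t (ih hs)
  | exI t _ ih => exact fun hs => .exI t (ih hs)
  | exE _ _ ih1 ih2 =>
      intro Γ hs
      refine .exE (ih1 hs) (ih2 ?_)
      intro B hB
      rcases hB with rfl | hB
      · exact .hyp (Set.mem_insert _ _)
      · obtain ⟨B', hB', rfl⟩ := hB
        exact ((hs B' hB').liftD 0).mono (Set.subset_insert _ _)
  | efqR he _ ih => exact fun hs => .efqR he (ih hs)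
  | raaR hr _ ih =>
      intro Γ hs
      exact .raaR hr (ih (fun B hB => by
        rcases hB with rfl | hB
        · exact .hyp (Set.mem_insert _ _)
        · exact (hs B hB).mono (Set.subset_insert _ _)))

theorem Deriv.cut1 {e r : Bool} {Γ : Set Formula} {B C : Formula}
    (d : Deriv e r {B} C) (h : Deriv e r Γ B) : Deriv e r Γ C :=
  d.cut (fun X hX => by rcases hX with rfl; exact h)

/-- Everything derivable intuitionistically (or minimally) is derivable classically. -/
theorem Deriv.classical {e r : Bool} {Γ : Set Formula} {A : Formula}
    (d : Deriv e r Γ A) : Deriv false true Γ A := by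
  induction d with
  | hyp hA => exact .hyp hA
  | topI => exact .topI
  | negI _ ih => exact .negI ih
  | negE _ _ ih1 ih2 => exact .negE ih1 ih2
  | conjI _ _ ih1 ih2 => exact .conjI ih1 ih2
  | conjE1 _ ih => exact .conjE1 ih
  | conjE2 _ ih => exact .conjE2 ih
  | disjI1 _ ih => exact .disjI1 ih
  | disjI2 _ ih => exact .disjI2 ih
  | disjE _ _ _ ih1 ih2 ih3 => exact .disjE ih1 ih2 ih3
  | implI _ ih => exact .implI ih
  | implE _ _ ih1 ih2 => exact .implE ih1 ih2
  | allI _ ih => exact .allI ih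
  | allE t _ ih => exact .allE t ih
  | exI t _ ih => exact .exI t ih
  | exE _ _ ih1 ih2 => exact .exE ih1 ih2
  | efqR _ _ ih => exact .raaR rfl (ih.mono (Set.subset_insert _ _))
  | raaR _ _ ih => exact .raaR rfl ih



theorem Deriv.dni {e r : Bool} {Γ : Set Formula} {A : Formula} (d : Deriv e r Γ A) :
    Deriv e r Γ (.neg (.neg A)) :=
  .negI (.negE (.hyp (Set.mem_insert _ _)) (d.mono (Set.subset_insert _ _)))

theorem Deriv.dnBot {e r : Bool} {Γ : Set Formula} (d : Deriv e r Γ (.neg (.neg .bot))) :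
    Deriv e r Γ .bot :=
  .negE d (.negI (.hyp (Set.mem_insert _ _)))

theorem Deriv.dnBind {e r : Bool} {Γ : Set Formula} {A B : Formula}
    (d1 : Deriv e r Γ (.neg (.neg A)))
    (d2 : Deriv e r (insert A Γ) (.neg (.neg B))) : Deriv e r Γ (.neg (.neg B)) :=
  .negI (.negE (d1.mono (Set.subset_insert _ _))
    (.negI (.negE (d2.mono (Set.insert_subset_insert (Set.subset_insert _ _)))
      (.hyp (Set.mem_insert_of_mem _ (Set.mem_insert _ _))))))

theorem Deriv.tneg {e r : Bool} {Γ : Set Formula} {A : Formula}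
    (d : Deriv e r Γ (.neg (.neg (.neg A)))) : Deriv e r Γ (.neg A) :=
  .negI (.negE (d.mono (Set.subset_insert _ _)) (Deriv.dni (.hyp (Set.mem_insert _ _))))

theorem jtr_image_lift (Γ : Set Formula) :
    Formula.jtr '' (Formula.lift 0 '' Γ) = Formula.lift 0 '' (Formula.jtr '' Γ) := by
  rw [← Set.image_comp, ← Set.image_comp]
  exact Set.image_congr' (fun A => Formula.jtr_lift A 0)

theorem glivenko_implI {Γ : Set Formula} {a b : Formula}
    (h : Deriv true false (insert a Γ) (.neg (.neg b))) :
    Deriv true false Γ (.neg (.neg (.impl a b))) := by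
  refine .negI ?_
  have notB : Deriv true false (insert (Formula.neg (.impl a b)) Γ) (.neg b) :=
    .negI (.negE (.hyp (Set.mem_insert_of_mem _ (Set.mem_insert _ _)))
      (.implI (.hyp (Set.mem_insert_of_mem _ (Set.mem_insert _ _)))))
  have nnA : Deriv true false (insert (Formula.neg (.impl a b)) Γ) (.neg (.neg a)) :=
    .negI (.negE (.hyp (Set.mem_insert_of_mem _ (Set.mem_insert _ _)))
      (.implI (.efqR rfl (.negE (.hyp (Set.mem_insert_of_mem _ (Set.mem_insert _ _)))
        (.hyp (Set.mem_insert _ _))))))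
  have nA : Deriv true false (insert (Formula.neg (.impl a b)) Γ) (.neg a) :=
    .negI (.negE (h.mono (Set.insert_subset_insert (Set.subset_insert _ _)))
      (notB.mono (Set.subset_insert _ _)))
  exact .negE nnA nA

theorem glivenko_fwd {Γ : Set Formula} {A : Formula} (d : Deriv false true Γ A) :
    Deriv true false (Formula.jtr '' Γ) (.neg (.neg A.jtr)) := by
  induction d with
  | hyp hA => exact Deriv.dni (.hyp (Set.mem_image_of_mem _ hA))
  | topI => exact Deriv.dni .topI
  | negI _ ih =>
      rw [Set.image_insert_eq] at ih
      exact Deriv.dni (.negI (Deriv.dnBot ih))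
  | negE _ _ ih1 ih2 =>
      refine Deriv.dnBind ih1 (Deriv.dnBind (ih2.mono (Set.subset_insert _ _)) ?_)
      exact Deriv.dni (.negE (.hyp (Set.mem_insert_of_mem _ (Set.mem_insert _ _)))
        (.hyp (Set.mem_insert _ _)))
  | conjI _ _ ih1 ih2 =>
      refine Deriv.dnBind ih1 (Deriv.dnBind (ih2.mono (Set.subset_insert _ _)) ?_)
      exact Deriv.dni (.conjI (.hyp (Set.mem_insert_of_mem _ (Set.mem_insert _ _)))
        (.hyp (Set.mem_insert _ _)))
  | conjE1 _ ih =>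
      exact Deriv.dnBind ih (Deriv.dni (.conjE1 (.hyp (Set.mem_insert _ _))))
  | conjE2 _ ih =>
      exact Deriv.dnBind ih (Deriv.dni (.conjE2 (.hyp (Set.mem_insert _ _))))
  | disjI1 _ ih =>
      exact Deriv.dnBind ih (Deriv.dni (.disjI1 (.hyp (Set.mem_insert _ _))))
  | disjI2 _ ih =>
      exact Deriv.dnBind ih (Deriv.dni (.disjI2 (.hyp (Set.mem_insert _ _))))
  | disjE _ _ _ ih1 ih2 ih3 =>
      rw [Set.image_insert_eq] at ih2 ih3
      refine Deriv.dnBind ih1 ?_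
      exact .disjE (.hyp (Set.mem_insert _ _))
        (ih2.mono (Set.insert_subset_insert (Set.subset_insert _ _)))
        (ih3.mono (Set.insert_subset_insert (Set.subset_insert _ _)))
  | implI _ ih =>
      rw [Set.image_insert_eq] at ih
      exact glivenko_implI ih
  | implE _ _ ih1 ih2 =>
      refine Deriv.dnBind ih1 (Deriv.dnBind (ih2.mono (Set.subset_insert _ _)) ?_)
      exact Deriv.dni (.implE (.hyp (Set.mem_insert_of_mem _ (Set.mem_insert _ _)))
        (.hyp (Set.mem_insert _ _)))
  | allI _ ih =>
      rw [jtr_image_lift] at ih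
      refine Deriv.dni (.negI ?_)
      refine .exE (.hyp (Set.mem_insert _ _)) ?_
      show Deriv true false _ Formula.bot
      refine .negE (ih.mono ?_) (.hyp (Set.mem_insert _ _))
      intro x hx
      exact Set.mem_insert_of_mem _ (Set.image_mono (Set.subset_insert _ _) hx)
  | allE t _ ih =>
      rw [Formula.jtr_subst]
      have h1 := ih.tneg
      refine .negI ?_
      exact .negE (h1.mono (Set.subset_insert _ _)) (.exI t (.hyp (Set.mem_insert _ _)))
  | exI t _ ih =>
      rw [Formula.jtr_subst] at ih
      exact Deriv.dnBind ih (Deriv.dni (.exI t (.hyp (Set.mem_insert _ _))))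
  | exE _ _ ih1 ih2 =>
      rw [Set.image_insert_eq, jtr_image_lift, Formula.jtr_lift] at ih2
      refine .negI ?_
      refine .negE (ih1.mono (Set.subset_insert _ _)) (.negI ?_)
      refine .exE (.hyp (Set.mem_insert _ _)) ?_
      show Deriv true false _ Formula.bot
      refine .negE (ih2.mono ?_) (.hyp ?_)
      · refine Set.insert_subset_insert (Set.image_mono ?_)
        intro x hx
        exact Set.mem_insert_of_mem _ (Set.mem_insert_of_mem _ hx)
      · exact Set.mem_insert_of_mem _ (Set.mem_image_of_mem _
          (Set.mem_insert_of_mem _ (Set.mem_insert _ _)))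
  | efqR he _ _ => simp at he
  | raaR _ _ ih =>
      rw [Set.image_insert_eq] at ih
      exact .negI (Deriv.dnBot ih)

theorem jtr_equiv : ∀ A : Formula,
    Deriv false true {A} A.jtr ∧ Deriv false true {A.jtr} A := by
  intro A
  induction A with
  | pred r a => exact ⟨.hyp (Set.mem_singleton _), .hyp (Set.mem_singleton _)⟩
  | bot => exact ⟨.hyp (Set.mem_singleton _), .hyp (Set.mem_singleton _)⟩
  | top => exact ⟨.hyp (Set.mem_singleton _), .hyp (Set.mem_singleton _)⟩
  | neg A ihA =>
      exact ⟨.negI (.negE (.hyp (Set.mem_insert_of_mem _ (Set.mem_singleton _)))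
          (ihA.2.cut1 (.hyp (Set.mem_insert _ _)))),
        .negI (.negE (.hyp (Set.mem_insert_of_mem _ (Set.mem_singleton _)))
          (ihA.1.cut1 (.hyp (Set.mem_insert _ _))))⟩
  | conj A B ihA ihB =>
      exact ⟨.conjI (ihA.1.cut1 (.conjE1 (.hyp (Set.mem_singleton _))))
          (ihB.1.cut1 (.conjE2 (.hyp (Set.mem_singleton _)))),
        .conjI (ihA.2.cut1 (.conjE1 (.hyp (Set.mem_singleton _))))
          (ihB.2.cut1 (.conjE2 (.hyp (Set.mem_singleton _))))⟩
  | disj A B ihA ihB =>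
      exact ⟨.disjE (.hyp (Set.mem_singleton _))
          (.disjI1 (ihA.1.cut1 (.hyp (Set.mem_insert _ _))))
          (.disjI2 (ihB.1.cut1 (.hyp (Set.mem_insert _ _)))),
        .disjE (.hyp (Set.mem_singleton _))
          (.disjI1 (ihA.2.cut1 (.hyp (Set.mem_insert _ _))))
          (.disjI2 (ihB.2.cut1 (.hyp (Set.mem_insert _ _))))⟩
  | impl A B ihA ihB =>
      exact ⟨.implI (ihB.1.cut1 (.implE (.hyp (Set.mem_insert_of_mem _ (Set.mem_singleton _)))
          (ihA.2.cut1 (.hyp (Set.mem_insert _ _))))),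
        .implI (ihB.2.cut1 (.implE (.hyp (Set.mem_insert_of_mem _ (Set.mem_singleton _)))
          (ihA.1.cut1 (.hyp (Set.mem_insert _ _)))))⟩
  | all A ihA =>
      constructor
      · refine .negI (.exE (.hyp (Set.mem_insert _ _)) ?_)
        show Deriv false true _ Formula.bot
        refine .negE (.hyp (Set.mem_insert _ _)) (ihA.1.cut1 ?_)
        have hall : Deriv false true
            (insert (Formula.neg A.jtr)
              (Formula.lift 0 '' insert (Formula.ex (.neg A.jtr)) {Formula.all A}))
            (.all (A.lift 1)) :=
          .hyp (Set.mem_insert_of_mem _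
            ⟨Formula.all A, Set.mem_insert_of_mem _ (Set.mem_singleton _), rfl⟩)
        have h := Deriv.allE (.var 0) hall
        rwa [show Formula.subst 0 (.var 0) (A.lift 1) = A from Formula.substVarLift 0 A] at h
      · refine .allI (.raaR rfl ?_)
        have nAj : Deriv false true
            (insert (Formula.neg A) (Formula.lift 0 '' {Formula.neg (.ex (.neg A.jtr))}))
            (.neg A.jtr) :=
          .negI (.negE (.hyp (Set.mem_insert_of_mem _ (Set.mem_insert _ _)))
            (ihA.2.cut1 (.hyp (Set.mem_insert _ _))))
        refine .negE (show Deriv false true _ (.neg (.ex (.neg (A.jtr.lift 1)))) from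
          .hyp (Set.mem_insert_of_mem _ ⟨_, Set.mem_singleton _, rfl⟩)) ?_
        refine .exI (.var 0) ?_
        show Deriv false true _ (Formula.neg ((A.jtr.lift 1).subst 0 (.var 0)))
        rw [show Formula.subst 0 (.var 0) (A.jtr.lift 1) = A.jtr from
          Formula.substVarLift 0 A.jtr]
        exact nAj
  | ex A ihA =>
      constructor
      · refine .exE (.hyp (Set.mem_singleton _)) ?_
        show Deriv false true _ (Formula.ex (A.jtr.lift 1))
        refine .exI (.var 0) ?_
        rw [show Formula.subst 0 (.var 0) (A.jtr.lift 1) = A.jtr from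
          Formula.substVarLift 0 A.jtr]
        exact ihA.1.cut1 (.hyp (Set.mem_insert _ _))
      · refine .exE (.hyp (Set.mem_singleton _)) ?_
        show Deriv false true _ (Formula.ex (A.lift 1))
        refine .exI (.var 0) ?_
        rw [show Formula.subst 0 (.var 0) (A.lift 1) = A from Formula.substVarLift 0 A]
        exact ihA.2.cut1 (.hyp (Set.mem_insert _ _))

/-- Generalized Glivenko theorem via the intuitionistic translation. -/
theorem generalized_glivenko_intuitionistic (Γ : Set Formula) (A : Formula) :
    NK Γ A ↔ NJ (Formula.jtr '' Γ) (.neg (.neg A.jtr)) := by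
  constructor
  · intro h
    exact glivenko_fwd h
  · intro h
    have h1 : Deriv false true (Formula.jtr '' Γ) (.neg (.neg A.jtr)) := Deriv.classical h
    have h2 : Deriv false true Γ (.neg (.neg A.jtr)) := h1.cut (fun B hB => by
      obtain ⟨B0, hB0, rfl⟩ := hB
      exact (jtr_equiv B0).1.cut1 (.hyp hB0))
    refine Deriv.raaR rfl ?_
    refine .negE (h2.mono (Set.subset_insert _ _)) (.negI ?_)
    exact .negE (.hyp (Set.mem_insert_of_mem _ (Set.mem_insert _ _)))
      ((jtr_equiv A).2.cut1 (.hyp (Set.mem_insert _ _)))
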